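/- Let μ be a nonnegative finite Borel measure on [-1,1], and set u0 = ∫ 1 dμ, u1 = ∫ x dμ, u2p = ∫ x² · 1_{[0,1]}(x) dμ, u2m = ∫ x² · 1_{[-1,0]}(x) dμ. Then u1 ≤ Real.sqrt (u2p * (u0 - u2m)) - u2m. -/

import Mathlib

open MeasureTheory Set

theorem dmm2_upper_bound (μ : Measure ℝ) [IsFiniteMeasure μ]
    (hsupp : μ (Icc (-1 : ℝ) 1)ᶜ = 0)
    (u0 u1 u2p u2m : ℝ)
    (hu0 : u0 = ∫ x, (1 : ℝ) ∂μ)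
    (hu1 : u1 = ∫ x, x ∂μ)
    (hu2p : u2p = ∫ x, x ^ 2 * (Icc (0 : ℝ) 1).indicator 1 x ∂μ)
    (hu2m : u2m = ∫ x, x ^ 2 * (Icc (-1 : ℝ) 0).indicator 1 x ∂μ) :
    u1 ≤ Real.sqrt (u2p * (u0 - u2m)) - u2m := by
  -- a.e. membership in [-1,1]
  have hae : ∀ᵐ x ∂μ, x ∈ Icc (-1 : ℝ) 1 := by
    rw [ae_iff]
    exact hsupp
  -- Integrability facts
  have hmeas_id : AEStronglyMeasurable (fun x : ℝ => x) μ :=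
    measurable_id.aestronglyMeasurable
  have hmeas_sq : AEStronglyMeasurable (fun x : ℝ => x ^ 2) μ :=
    (measurable_id.pow_const 2).aestronglyMeasurable
  have hint_id : Integrable (fun x : ℝ => x) μ := by
    refine ⟨hmeas_id, HasFiniteIntegral.of_bounded (C := 1) ?_⟩
    filter_upwards [hae] with x hx
    rw [Real.norm_eq_abs, abs_le]
    exact ⟨hx.1, hx.2⟩
  have hint_sq : Integrable (fun x : ℝ => x ^ 2) μ := by
    refine ⟨hmeas_sq, HasFiniteIntegral.of_bounded (C := 1) ?_⟩
    filter_upwards [hae] with x hx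
    rw [Real.norm_eq_abs, abs_le]
    constructor <;> nlinarith [hx.1, hx.2]
  -- Rewrite indicator integrals as set integrals
  have hind : ∀ s : Set ℝ, (fun x : ℝ => x ^ 2 * s.indicator 1 x)
      = s.indicator (fun x => x ^ 2) := by
    intro s
    funext x
    by_cases h : x ∈ s <;> simp [h]
  have hIcc01 : MeasurableSet (Icc (0 : ℝ) 1) := measurableSet_Icc
  have hIccm : MeasurableSet (Icc (-1 : ℝ) 0) := measurableSet_Icc
  have hIoc : MeasurableSet (Ioc (0 : ℝ) 1) := measurableSet_Ioc
  have hu2p' : u2p = ∫ x in Icc (0 : ℝ) 1, x ^ 2 ∂μ := by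
    rw [hu2p, hind, integral_indicator hIcc01]
  have hu2m' : u2m = ∫ x in Icc (-1 : ℝ) 0, x ^ 2 ∂μ := by
    rw [hu2m, hind, integral_indicator hIccm]
  -- split u1
  have hdisj : Disjoint (Icc (-1 : ℝ) 0) (Ioc (0 : ℝ) 1) := by
    rw [Set.disjoint_left]
    rintro x ⟨_, hx2⟩ ⟨hx3, _⟩
    linarith
  have hun : Icc (-1 : ℝ) 0 ∪ Ioc (0 : ℝ) 1 = Icc (-1 : ℝ) 1 :=
    Set.Icc_union_Ioc_eq_Icc (by norm_num) (by norm_num)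
  have hsplit : u1 = (∫ x in Icc (-1 : ℝ) 0, x ∂μ) + ∫ x in Ioc (0 : ℝ) 1, x ∂μ := by
    have h1 : (∫ x, x ∂μ) = ∫ x in Icc (-1 : ℝ) 1, x ∂μ := by
      rw [Measure.restrict_eq_self_of_ae_mem hae]
    rw [hu1, h1, ← hun, setIntegral_union hdisj hIoc
      hint_id.integrableOn hint_id.integrableOn]
  set S := ∫ x in Ioc (0 : ℝ) 1, x ∂μ with hS
  -- negative part bound : ∫ over Icc (-1) 0 of x ≤ -u2m
  have hneg : (∫ x in Icc (-1 : ℝ) 0, x ∂μ) ≤ -u2m := by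
    have : (∫ x in Icc (-1 : ℝ) 0, x ∂μ) ≤ ∫ x in Icc (-1 : ℝ) 0, -(x ^ 2) ∂μ := by
      refine setIntegral_mono_on hint_id.integrableOn hint_sq.neg.integrableOn hIccm ?_
      intro x hx
      nlinarith [hx.1, hx.2]
    rw [integral_neg] at this
    rw [hu2m']
    exact this
  -- quantities for Cauchy–Schwarz
  set m := (μ (Ioc (0 : ℝ) 1)).toReal with hm
  set Q := ∫ x in Ioc (0 : ℝ) 1, x ^ 2 ∂μ with hQ
  have hS_nonneg : 0 ≤ S := by
    refine setIntegral_nonneg hIoc fun x hx => ?_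
    linarith [hx.1]
  have hQ_nonneg : 0 ≤ Q :=
    setIntegral_nonneg hIoc fun x _ => sq_nonneg x
  have hm_nonneg : 0 ≤ m := ENNReal.toReal_nonneg
  -- Cauchy–Schwarz : S^2 ≤ Q * m
  have hCS : S ^ 2 ≤ Q * m := by
    rcases eq_or_lt_of_le hm_nonneg with hm0 | hm0
    · have hμ0 : μ (Ioc (0 : ℝ) 1) = 0 := by
        rcases (ENNReal.toReal_eq_zero_iff _).mp hm0.symm with h | h
        · exact h
        · exact absurd h (measure_ne_top μ _)
      have hS0 : S = 0 := by
        rw [hS, Measure.restrict_eq_zero.mpr hμ0, integral_zero_measure]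
      rw [hS0, ← hm0]
      simp
    · set t := S / m with ht
      have hνint_id : Integrable (fun x : ℝ => x) (μ.restrict (Ioc (0:ℝ) 1)) :=
        hint_id.restrict
      have hνint_sq : Integrable (fun x : ℝ => x ^ 2) (μ.restrict (Ioc (0:ℝ) 1)) :=
        hint_sq.restrict
      have hkey : (0 : ℝ) ≤ ∫ x in Ioc (0 : ℝ) 1, (x - t) ^ 2 ∂μ :=
        integral_nonneg fun x => sq_nonneg _
      have hval : (∫ x in Ioc (0 : ℝ) 1, (x - t) ^ 2 ∂μ)
          = Q - (2 * t) * S + t ^ 2 * m := by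
        have hexp : (fun x : ℝ => (x - t) ^ 2)
            = fun x => x ^ 2 - (2 * t) * x + t ^ 2 := by
          funext x; ring
        rw [hexp]
        have h1 : Integrable (fun x : ℝ => x ^ 2 - 2 * t * x) (μ.restrict (Ioc (0:ℝ) 1)) :=
          hνint_sq.sub (hνint_id.const_mul _)
        rw [integral_add h1 (integrable_const _),
          integral_sub hνint_sq (hνint_id.const_mul _), integral_const_mul,
          integral_const]
        simp [hm, hQ, hS, smul_eq_mul, Measure.restrict_apply_univ, mul_comm, measureReal_def]
      rw [hval] at hkey
      have hkey2 : 0 ≤ Q - S ^ 2 / m := by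
        have heq : Q - (2 * t) * S + t ^ 2 * m = Q - S ^ 2 / m := by
          rw [ht]; field_simp; ring
        rwa [heq] at hkey
      have := sub_nonneg.mp hkey2
      exact (div_le_iff₀ hm0).mp this
  -- bound Q ≤ u2p
  have hQle : Q ≤ u2p := by
    rw [hu2p']
    refine setIntegral_mono_set hint_sq.integrableOn
      (Filter.Eventually.of_forall fun x => sq_nonneg x)
      (HasSubset.Subset.eventuallyLE Ioc_subset_Icc_self)
  -- bound m ≤ u0 - u2m
  have hmle : m ≤ u0 - u2m := by
    have hu0' : u0 = (μ Set.univ).toReal := by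
      rw [hu0, integral_const, smul_eq_mul, mul_one, measureReal_def]
    have h2m : u2m ≤ (μ (Icc (-1 : ℝ) 0)).toReal := by
      have : (∫ x in Icc (-1 : ℝ) 0, x ^ 2 ∂μ) ≤ ∫ x in Icc (-1 : ℝ) 0, (1 : ℝ) ∂μ := by
        refine setIntegral_mono_on hint_sq.integrableOn (integrable_const _) hIccm ?_
        intro x hx
        nlinarith [hx.1, hx.2]
      rw [integral_const, smul_eq_mul, mul_one, measureReal_def, Measure.restrict_apply_univ] at this
      rw [hu2m']
      exact this
    have hsum : (μ (Icc (-1 : ℝ) 0)).toReal + m ≤ u0 := by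
      rw [hu0', hm]
      rw [← ENNReal.toReal_add (measure_ne_top μ _) (measure_ne_top μ _)]
      refine ENNReal.toReal_mono (measure_ne_top μ _) ?_
      rw [← measure_union hdisj hIoc, hun]
      exact measure_mono (Set.subset_univ _)
    linarith
  -- conclude
  have hSle : S ≤ Real.sqrt (u2p * (u0 - u2m)) := by
    have h1 : S ≤ Real.sqrt (Q * m) := by
      rw [Real.le_sqrt hS_nonneg (mul_nonneg hQ_nonneg hm_nonneg)]
      exact hCS
    have h2 : Real.sqrt (Q * m) ≤ Real.sqrt (u2p * (u0 - u2m)) := by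
      apply Real.sqrt_le_sqrt
      have hu2p_nonneg : 0 ≤ u2p := le_trans hQ_nonneg hQle
      exact mul_le_mul hQle hmle hm_nonneg hu2p_nonneg
    linarith
  linarith [hneg, hSle, hsplit.le, hsplit.ge]
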